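/- Let s>0 and λ>0, and let μ be the Gamma distribution on (0,∞) with density (λ^{2s}/Γ(2s)) y^{2s-1} e^{-λ y}. Define, for f:(0,∞)→ℝ polynomial, (𝓛 f)(y) = ∫_0^{y}(dα/α)(1-α/y)^{2s-1}[f(y-α)-f(y)] + ∫_0^∞ (dα/α) e^{-λα}[f(y+α)-f(y)]. Then for all polynomials f,g: ∫ (𝓛f)(y) g(y) μ(dy) = ∫ f(y) (𝓛g)(y) μ(dy). -/

import Mathlib

open MeasureTheory Real Set Finset Polynomial

noncomputable section

namespace HeatModel

/-- Density of the Gamma(2s, lam) distribution. -/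
def gammaDensity (s lam : ℝ) (y : ℝ) : ℝ :=
  lam ^ (2 * s) / Real.Gamma (2 * s) * y ^ (2 * s - 1) * Real.exp (-(lam * y))

/-- The boundary reservoir generator of the integrable heat conduction model. -/
def reservoirGen (s lam : ℝ) (f : ℝ → ℝ) (y : ℝ) : ℝ :=
  (∫ a in Set.Ioo 0 y, (1 - a / y) ^ (2 * s - 1) / a * (f (y - a) - f y))
    + ∫ a in Set.Ioi (0 : ℝ), Real.exp (-(lam * a)) / a * (f (y + a) - f y)




def pp (x : ℝ) (N : ℕ) : ℝ := ∏ i ∈ Finset.range N, (x + i)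

lemma pp_succ (x : ℝ) (N : ℕ) : pp x (N + 1) = pp x N * (x + N) :=
  Finset.prod_range_succ _ _

lemma pp_sub_succ (x : ℝ) {t N : ℕ} (h : t + 1 ≤ N) :
    pp x (N - t) = pp x (N - (t + 1)) * (x + N - (t + 1)) := by
  have h1 : N - t = (N - (t + 1)) + 1 := by omega
  rw [h1, pp_succ]
  congr 1
  have : ((N - (t+1) : ℕ) : ℝ) = (N : ℝ) - (t + 1) := by
    push_cast [Nat.cast_sub h]; ring
  rw [this]; ring

def csum (x : ℝ) (m N : ℕ) : ℝ := ∑ j ∈ Finset.range m, pp x N / (x + j)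

def Tsum (x : ℝ) (m N : ℕ) : ℝ :=
  ∑ k ∈ Finset.range m, (m.choose (k+1) : ℝ) * (k.factorial : ℝ) * pp x (N - (k+1))

def Usum (x : ℝ) (m N : ℕ) : ℝ :=
  ∑ k ∈ Finset.range m, (m.choose (k+1) : ℝ) * ((k+1).factorial : ℝ) * pp x (N - (k+1))

def Rsum (x : ℝ) (m n : ℕ) : ℝ :=
  ∑ j ∈ Finset.range m, ∑ k ∈ Finset.range n,
    (m.choose (j+1) : ℝ) * (n.choose (k+1) : ℝ) * ((j+k+1).factorial : ℝ)
      * pp x (m + n - (j+k+2))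

lemma csum_succ (x : ℝ) (m N : ℕ) : csum x m (N + 1) = (x + N) * csum x m N := by
  unfold csum
  rw [Finset.mul_sum]
  refine Finset.sum_congr rfl fun j _ => ?_
  rw [pp_succ, mul_comm (pp x N), mul_div_assoc]

lemma Tsum_succ (x : ℝ) {m N : ℕ} (h : m ≤ N) :
    Tsum x m (N + 1) = (x + N) * Tsum x m N - Usum x m N := by
  unfold Tsum Usum
  rw [Finset.mul_sum, ← Finset.sum_sub_distrib]
  refine Finset.sum_congr rfl fun k hk => ?_
  have hk' : k + 1 ≤ N := by
    have := Finset.mem_range.mp hk; omega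
  have h1 : N + 1 - (k + 1) = N - k := by omega
  rw [h1, pp_sub_succ x hk']
  have h2 : ((k+1).factorial : ℝ) = (k.factorial : ℝ) * (k + 1) := by
    rw [Nat.factorial_succ]; push_cast; ring
  rw [h2]; ring

lemma inner_succ (x : ℝ) {n j M : ℕ} (h : j + 1 + n ≤ M) :
    ∑ k ∈ Finset.range (n+1),
        ((n+1).choose (k+1) : ℝ) * ((j+k+1).factorial : ℝ) * pp x (M + 1 - (j+k+2))
      = (x + M) * ∑ k ∈ Finset.range n,
          (n.choose (k+1) : ℝ) * ((j+k+1).factorial : ℝ) * pp x (M - (j+k+2))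
        + ((j+1).factorial : ℝ) * pp x (M - (j+1)) := by
  have hsplit : ∀ k, ((n+1).choose (k+1) : ℝ) = (n.choose k : ℝ) + (n.choose (k+1) : ℝ) := by
    intro k; rw [Nat.choose_succ_succ]; push_cast; ring
  simp only [hsplit, add_mul]
  rw [Finset.sum_add_distrib]
  have hB : ∑ k ∈ Finset.range (n+1),
      (n.choose k : ℝ) * ((j+k+1).factorial : ℝ) * pp x (M + 1 - (j+k+2))
      = (∑ k ∈ Finset.range n,
          (n.choose (k+1) : ℝ) * ((j+k+2).factorial : ℝ) * pp x (M - (j+k+2)))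
        + ((j+1).factorial : ℝ) * pp x (M - (j+1)) := by
    rw [Finset.sum_range_succ']
    congr 1
    · refine Finset.sum_congr rfl fun k hk => ?_
      have e1 : j + (k+1) + 1 = j + k + 2 := by omega
      have e2 : M + 1 - (j + (k+1) + 2) = M - (j + k + 2) := by omega
      rw [e1, e2]
    · have e3 : M + 1 - (j + 0 + 2) = M - (j + 1) := by omega
      have e4 : j + 0 + 1 = j + 1 := by omega
      rw [e3, e4, Nat.choose_zero_right]
      push_cast; ring
  have hA : ∑ k ∈ Finset.range (n+1),
      (n.choose (k+1) : ℝ) * ((j+k+1).factorial : ℝ) * pp x (M + 1 - (j+k+2))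
      = (x + M) * (∑ k ∈ Finset.range n,
          (n.choose (k+1) : ℝ) * ((j+k+1).factorial : ℝ) * pp x (M - (j+k+2)))
        - ∑ k ∈ Finset.range n,
          (n.choose (k+1) : ℝ) * ((j+k+2).factorial : ℝ) * pp x (M - (j+k+2)) := by
    rw [Finset.sum_range_succ, Nat.choose_succ_self]
    rw [Nat.cast_zero, zero_mul, zero_mul, add_zero, Finset.mul_sum, ← Finset.sum_sub_distrib]
    refine Finset.sum_congr rfl fun k hk => ?_
    have hk' : (j+k+1) + 1 ≤ M := by
      have := Finset.mem_range.mp hk; omega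
    have e5 : M + 1 - (j + k + 2) = M - (j + k + 1) := by omega
    have e6 : j + k + 1 + 1 = j + k + 2 := by omega
    rw [e5, pp_sub_succ x hk', e6]
    have h2 : ((j+k+2).factorial : ℝ) = ((j+k+1).factorial : ℝ) * (j + k + 2) := by
      have e : j+k+2 = (j+k+1)+1 := by omega
      rw [e, Nat.factorial_succ]; push_cast; ring
    rw [h2]
    push_cast
    ring
  rw [hB, hA]
  ring

lemma Rsum_succ (x : ℝ) (m n : ℕ) :
    Rsum x m (n + 1) = (x + (m+n : ℕ)) * Rsum x m n + Usum x m (m+n) := by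
  unfold Rsum Usum
  rw [Finset.mul_sum, ← Finset.sum_add_distrib]
  refine Finset.sum_congr rfl fun j hj => ?_
  have hj' : j + 1 ≤ m := Finset.mem_range.mp hj
  have key := inner_succ x (n := n) (j := j) (M := m + n) (by omega)
  have l1 : ∑ k ∈ Finset.range (n+1),
      (m.choose (j+1) : ℝ) * ((n+1).choose (k+1) : ℝ) * ((j+k+1).factorial : ℝ)
        * pp x (m + (n+1) - (j+k+2))
      = (m.choose (j+1) : ℝ) * ∑ k ∈ Finset.range (n+1),
          ((n+1).choose (k+1) : ℝ) * ((j+k+1).factorial : ℝ) * pp x ((m+n) + 1 - (j+k+2)) := by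
    rw [Finset.mul_sum]
    refine Finset.sum_congr rfl fun k _ => ?_
    have e : m + (n+1) - (j+k+2) = (m+n) + 1 - (j+k+2) := by omega
    rw [e]; ring
  rw [l1, key, mul_add, Finset.mul_sum, Finset.mul_sum]
  congr 1
  · simp only [Finset.mul_sum]
    exact Finset.sum_congr rfl fun k _ => by ring
  · ring

lemma Rsum_comm (x : ℝ) (m n : ℕ) : Rsum x m n = Rsum x n m := by
  unfold Rsum
  rw [Finset.sum_comm]
  refine Finset.sum_congr rfl fun k _ => Finset.sum_congr rfl fun j _ => ?_
  have e1 : k + j + 1 = j + k + 1 := by omega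
  have e2 : n + m - (k+j+2) = m + n - (j+k+2) := by omega
  rw [e1, e2]; ring

lemma base_identity (x : ℝ) (hx : 0 < x) (m : ℕ) : Tsum x m m = csum x m m := by
  induction m with
  | zero => simp [Tsum, csum]
  | succ m ih =>
    have hc : csum x (m+1) (m+1) = (x + m) * csum x m m + pp x m := by
      unfold csum
      rw [Finset.sum_range_succ]
      congr 1
      · rw [Finset.mul_sum]
        refine Finset.sum_congr rfl fun j _ => ?_
        rw [pp_succ, mul_comm (pp x m), mul_div_assoc]
      · rw [pp_succ, mul_div_assoc, div_self (by positivity), mul_one]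
    have hT : Tsum x (m+1) (m+1) = (x + m) * Tsum x m m + pp x m := by
      unfold Tsum
      have hsplit : ∀ k, ((m+1).choose (k+1) : ℝ) = (m.choose k : ℝ) + (m.choose (k+1) : ℝ) := by
        intro k; rw [Nat.choose_succ_succ]; push_cast; ring
      simp only [hsplit, add_mul]
      rw [Finset.sum_add_distrib]
      have hSA : ∑ k ∈ Finset.range (m+1),
          (m.choose k : ℝ) * (k.factorial : ℝ) * pp x (m + 1 - (k+1))
          = (∑ k ∈ Finset.range m,
              (m.choose (k+1) : ℝ) * ((k+1).factorial : ℝ) * pp x (m - (k+1))) + pp x m := by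
        rw [Finset.sum_range_succ']
        congr 1
        · refine Finset.sum_congr rfl fun k hk => ?_
          have e : m + 1 - (k + 1 + 1) = m - (k+1) := by omega
          rw [e]
        · have e : m + 1 - (0 + 1) = m := by omega
          rw [e, Nat.choose_zero_right]
          simp [Nat.factorial]
      have hSB : ∑ k ∈ Finset.range (m+1),
          (m.choose (k+1) : ℝ) * (k.factorial : ℝ) * pp x (m + 1 - (k+1))
          = (x + m) * Tsum x m m
            - ∑ k ∈ Finset.range m,
              (m.choose (k+1) : ℝ) * ((k+1).factorial : ℝ) * pp x (m - (k+1)) := by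
        rw [Finset.sum_range_succ, Nat.choose_succ_self]
        rw [Nat.cast_zero, zero_mul, zero_mul, add_zero]
        unfold Tsum
        rw [Finset.mul_sum, ← Finset.sum_sub_distrib]
        refine Finset.sum_congr rfl fun k hk => ?_
        have hk' : k + 1 ≤ m := Finset.mem_range.mp hk
        have e : m + 1 - (k + 1) = m - k := by omega
        rw [e, pp_sub_succ x hk']
        have h2 : ((k+1).factorial : ℝ) = (k.factorial : ℝ) * (k + 1) := by
          rw [Nat.factorial_succ]; push_cast; ring
        rw [h2]; ring
      rw [hSA, hSB]
      unfold Tsum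
      ring
    rw [hc, hT, ih]

lemma main_identity (x : ℝ) (hx : 0 < x) (m n : ℕ) :
    Tsum x m (m+n) - csum x m (m+n) + Rsum x m n = 0 := by
  induction n with
  | zero => simp [Rsum, base_identity x hx m]
  | succ n ih =>
    have e : m + (n+1) = (m+n) + 1 := by omega
    rw [e, Tsum_succ x (by omega), csum_succ, Rsum_succ]
    linear_combination (x + ((m+n : ℕ) : ℝ)) * ih

lemma sym_identity (x : ℝ) (hx : 0 < x) (m n : ℕ) :
    Tsum x m (m+n) - csum x m (m+n) = Tsum x n (n+m) - csum x n (n+m) := by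
  have h1 := main_identity x hx m n
  have h2 := main_identity x hx n m
  rw [Rsum_comm x n m] at h2
  have e : n + m = m + n := by omega
  rw [e] at h2 ⊢
  linarith


lemma integrableOn_rpow_exp {c lam : ℝ} (hc : -1 < c) (hlam : 0 < lam) :
    IntegrableOn (fun t : ℝ => t ^ c * Real.exp (-(lam * t))) (Set.Ioi 0) := by
  refine (integrableOn_rpow_mul_exp_neg_mul_rpow hc zero_lt_one hlam).congr_fun
    (fun t ht => ?_) measurableSet_Ioi
  simp only [Real.rpow_one, neg_mul]

lemma integrableOn_pow_exp (j : ℕ) {lam : ℝ} (hlam : 0 < lam) :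
    IntegrableOn (fun t : ℝ => t ^ j * Real.exp (-(lam * t))) (Set.Ioi 0) := by
  refine (integrableOn_rpow_exp (c := (j : ℝ))
    (lt_of_lt_of_le neg_one_lt_zero (Nat.cast_nonneg j)) hlam).congr_fun
    (fun t ht => ?_) measurableSet_Ioi
  show t ^ (j : ℝ) * _ = _
  rw [Real.rpow_natCast]

lemma integral_pow_exp (j : ℕ) {lam : ℝ} (hlam : 0 < lam) :
    ∫ t in Set.Ioi (0:ℝ), t ^ j * Real.exp (-(lam * t))
      = (j.factorial : ℝ) / lam ^ (j + 1) := by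
  have h := Real.integral_rpow_mul_exp_neg_mul_Ioi (a := (j : ℝ) + 1) (by positivity) hlam
  rw [add_sub_cancel_right] at h
  have h2 : ∫ t in Set.Ioi (0:ℝ), t ^ j * Real.exp (-(lam * t))
      = ∫ t in Set.Ioi (0:ℝ), t ^ (j : ℝ) * Real.exp (-(lam * t)) := by
    refine setIntegral_congr_fun measurableSet_Ioi (fun t ht => ?_)
    rw [Real.rpow_natCast]
  rw [h2, h, Real.Gamma_nat_eq_factorial]
  have h3 : ((j : ℝ) + 1) = ((j + 1 : ℕ) : ℝ) := by push_cast; ring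
  rw [h3, Real.rpow_natCast, div_pow, one_pow, div_mul_eq_mul_div, one_mul]

lemma Gamma_pp {x : ℝ} (hx : 0 < x) (r : ℕ) :
    Real.Gamma (x + r) = pp x r * Real.Gamma x := by
  induction r with
  | zero => simp [pp]
  | succ r ih =>
    have e : x + ((r : ℕ) + 1 : ℕ) = (x + r) + 1 := by push_cast; ring
    rw [e, Real.Gamma_add_one (by positivity), ih, pp_succ]
    ring

lemma integrableOn_one_sub_rpow {c : ℝ} (hc : -1 < c) :
    IntegrableOn (fun u : ℝ => (1 - u) ^ c) (Set.Ioo (0:ℝ) 1) := by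
  have h := (intervalIntegral.intervalIntegrable_rpow' (a := 0) (b := 1) hc).comp_sub_left 1
  norm_num at h
  exact (intervalIntegrable_iff_integrableOn_Ioo_of_le zero_le_one).mp h.symm

lemma integral_one_sub_rpow {c : ℝ} (hc : -1 < c) :
    ∫ u in Set.Ioo (0:ℝ) 1, (1 - u) ^ c = 1 / (c + 1) := by
  rw [← MeasureTheory.integral_Ioc_eq_integral_Ioo,
    ← intervalIntegral.integral_of_le zero_le_one]
  have h := intervalIntegral.integral_comp_sub_left (a := 0) (b := 1)
    (fun t : ℝ => t ^ c) 1
  norm_num at h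
  rw [h, integral_rpow (Or.inl hc), Real.one_rpow, Real.zero_rpow (by linarith), sub_zero]


lemma gammaDensity_mul_pow_integrableOn {s lam : ℝ} (hs : 0 < s) (hlam : 0 < lam) (r : ℕ) :
    IntegrableOn (fun y => gammaDensity s lam y * y ^ r) (Set.Ioi 0) := by
  have hc : (-1 : ℝ) < 2 * s - 1 + r := by
    have : (0:ℝ) ≤ r := Nat.cast_nonneg r
    linarith
  refine MeasureTheory.IntegrableOn.congr_fun
    ((integrableOn_rpow_exp hc hlam).const_mul (lam ^ (2 * s) / Real.Gamma (2 * s)))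
    (fun y hy => ?_) measurableSet_Ioi
  have hy : (0:ℝ) < y := hy
  unfold gammaDensity
  rw [Real.rpow_add hy, Real.rpow_natCast]
  ring

lemma gammaDensity_integral_mul_pow {s lam : ℝ} (hs : 0 < s) (hlam : 0 < lam) (r : ℕ) :
    ∫ y in Set.Ioi (0:ℝ), gammaDensity s lam y * y ^ r = pp (2 * s) r / lam ^ r := by
  have hc : (-1 : ℝ) < 2 * s - 1 + r := by
    have : (0:ℝ) ≤ r := Nat.cast_nonneg r
    linarith
  have h1 : ∫ y in Set.Ioi (0:ℝ), gammaDensity s lam y * y ^ r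
      = ∫ y in Set.Ioi (0:ℝ), (lam ^ (2 * s) / Real.Gamma (2 * s))
          * (y ^ (2 * s - 1 + r) * Real.exp (-(lam * y))) := by
    refine setIntegral_congr_fun measurableSet_Ioi (fun y hy => ?_)
    have hy : (0:ℝ) < y := hy
    unfold gammaDensity
    rw [Real.rpow_add hy, Real.rpow_natCast]
    ring
  rw [h1, MeasureTheory.integral_const_mul]
  have h2 := Real.integral_rpow_mul_exp_neg_mul_Ioi (a := 2 * s + r) (by positivity) hlam
  have e : 2 * s + (r:ℝ) - 1 = 2 * s - 1 + r := by ring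
  rw [e] at h2
  rw [h2, Gamma_pp (by linarith : (0:ℝ) < 2 * s) r]
  have hgam : Real.Gamma (2 * s) ≠ 0 := (Real.Gamma_pos_of_pos (by linarith)).ne'
  have hlx : lam ^ (2 * s) ≠ 0 := (Real.rpow_pos_of_pos hlam _).ne'
  have h3 : ((1:ℝ) / lam) ^ (2 * s + (r:ℝ)) = (lam ^ (2 * s))⁻¹ * (lam ^ r)⁻¹ := by
    rw [Real.rpow_add (by positivity), one_div, Real.inv_rpow hlam.le,
      Real.rpow_natCast, inv_pow]
  rw [h3]
  field_simp

lemma down_eval {s y : ℝ} (hs : 0 < s) (hy : 0 < y) (p : Polynomial ℝ) :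
    ∫ a in Set.Ioo 0 y, (1 - a / y) ^ (2 * s - 1) / a * (eval (y - a) p - eval y p)
      = -∑ k ∈ Finset.range (p.natDegree + 1),
          p.coeff k * (∑ j ∈ Finset.range k, 1 / (2 * s + j)) * y ^ k := by
  set F : ℝ → ℝ := fun a => (1 - a / y) ^ (2 * s - 1) / a * (eval (y - a) p - eval y p) with hF
  have step1 : ∫ a in Set.Ioo 0 y, F a = y • ∫ u in Set.Ioo (0:ℝ) 1, F (y * u) := by
    rw [← MeasureTheory.integral_Ioc_eq_integral_Ioo,
      ← intervalIntegral.integral_of_le hy.le]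
    have h2 := intervalIntegral.integral_comp_mul_left (a := (0:ℝ)) (b := 1) F hy.ne'
    rw [mul_zero, mul_one] at h2
    have h3 : y • ∫ x in (0:ℝ)..1, F (y * x) = ∫ x in (0:ℝ)..y, F x := by
      rw [h2, smul_inv_smul₀ hy.ne']
    rw [← h3, intervalIntegral.integral_of_le zero_le_one,
      MeasureTheory.integral_Ioc_eq_integral_Ioo]
  rw [step1]
  have step2 : ∫ u in Set.Ioo (0:ℝ) 1, F (y * u)
      = ∫ u in Set.Ioo (0:ℝ) 1, ∑ k ∈ Finset.range (p.natDegree + 1),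
          (-(p.coeff k * y ^ k) * y⁻¹) * ∑ j ∈ Finset.range k, (1 - u) ^ (2 * s - 1 + (j:ℝ)) := by
    refine setIntegral_congr_fun measurableSet_Ioo (fun u hu => ?_)
    obtain ⟨hu0, hu1⟩ := hu
    have h1u : (0:ℝ) < 1 - u := by linarith
    have harg : 1 - (y * u) / y = 1 - u := by field_simp
    have heval : eval (y - y * u) p - eval y p
        = ∑ k ∈ Finset.range (p.natDegree + 1),
            p.coeff k * y ^ k * ((∑ j ∈ Finset.range k, (1-u) ^ j) * (-u)) := by
      rw [Polynomial.eval_eq_sum_range (y - y * u), Polynomial.eval_eq_sum_range y,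
        ← Finset.sum_sub_distrib]
      refine Finset.sum_congr rfl fun k _ => ?_
      have e1 : y - y * u = y * (1 - u) := by ring
      have e2 : ((1-u:ℝ)) ^ k - 1 = (∑ j ∈ Finset.range k, (1-u) ^ j) * (-u) := by
        have := geom_sum_mul (1 - u : ℝ) k
        have e3 : (1 - u - 1 : ℝ) = -u := by ring
        rw [e3] at this
        rw [this]
      rw [e1, mul_pow]
      calc p.coeff k * (y ^ k * (1-u) ^ k) - p.coeff k * y ^ k
          = p.coeff k * y ^ k * ((1-u) ^ k - 1) := by ring
        _ = p.coeff k * y ^ k * ((∑ j ∈ Finset.range k, (1-u) ^ j) * (-u)) := by rw [e2]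
    show (1 - (y*u) / y) ^ (2 * s - 1) / (y*u) * (eval (y - y*u) p - eval y p) = _
    rw [harg, heval, Finset.mul_sum]
    refine Finset.sum_congr rfl fun k _ => ?_
    have hexp : ∀ j : ℕ, (1-u) ^ (2 * s - 1 + (j:ℝ)) = (1-u) ^ (2*s-1) * (1-u) ^ j := by
      intro j
      rw [Real.rpow_add h1u, Real.rpow_natCast]
    simp only [hexp]
    rw [← Finset.mul_sum]
    field_simp
  rw [step2]
  have hint : ∀ k ∈ Finset.range (p.natDegree + 1),
      Integrable (fun u : ℝ => (-(p.coeff k * y ^ k) * y⁻¹)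
        * ∑ j ∈ Finset.range k, (1 - u) ^ (2 * s - 1 + (j:ℝ)))
        (volume.restrict (Set.Ioo (0:ℝ) 1)) := by
    intro k _
    refine Integrable.const_mul ?_ _
    refine integrable_finset_sum _ (fun j _ => ?_)
    refine integrableOn_one_sub_rpow ?_
    have : (0:ℝ) ≤ j := Nat.cast_nonneg j
    linarith
  rw [MeasureTheory.integral_finset_sum _ hint]
  rw [smul_eq_mul, Finset.mul_sum, ← Finset.sum_neg_distrib]
  refine Finset.sum_congr rfl fun k _ => ?_
  rw [MeasureTheory.integral_const_mul,
    MeasureTheory.integral_finset_sum _ (fun j _ => integrableOn_one_sub_rpow (by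
      have : (0:ℝ) ≤ j := Nat.cast_nonneg j
      linarith))]
  have hval : ∀ j ∈ Finset.range k,
      (∫ u in Set.Ioo (0:ℝ) 1, (1 - u) ^ (2 * s - 1 + (j:ℝ))) = 1 / (2 * s + j) := by
    intro j _
    rw [integral_one_sub_rpow (by
      have : (0:ℝ) ≤ j := Nat.cast_nonneg j
      linarith)]
    congr 1
    ring
  rw [Finset.sum_congr rfl hval]
  field_simp


lemma pow_sub_pow_eq {y a : ℝ} (ha : a ≠ 0) (k : ℕ) :
    (y + a) ^ k - y ^ k
      = ∑ j ∈ Finset.range k, a ^ (j+1) * y ^ (k-1-j) * (k.choose (j+1) : ℝ) := by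
  rw [show y + a = a + y by ring, add_pow, Finset.sum_range_succ']
  simp only [pow_zero, one_mul, Nat.choose_zero_right, Nat.cast_one, mul_one, Nat.sub_zero]
  rw [add_sub_cancel_right]
  refine Finset.sum_congr rfl fun j _ => ?_
  have e : k - (j + 1) = k - 1 - j := by omega
  rw [e]

lemma up_eval {lam y : ℝ} (hlam : 0 < lam) (p : Polynomial ℝ) :
    ∫ a in Set.Ioi (0:ℝ), Real.exp (-(lam * a)) / a * (eval (y + a) p - eval y p)
      = ∑ k ∈ Finset.range (p.natDegree + 1), p.coeff k *
          ∑ j ∈ Finset.range k,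
            (k.choose (j+1) : ℝ) * (j.factorial : ℝ) / lam ^ (j+1) * y ^ (k-1-j) := by
  have step1 : ∫ a in Set.Ioi (0:ℝ), Real.exp (-(lam * a)) / a * (eval (y + a) p - eval y p)
      = ∫ a in Set.Ioi (0:ℝ), ∑ k ∈ Finset.range (p.natDegree + 1),
          ∑ j ∈ Finset.range k,
            (p.coeff k * (k.choose (j+1) : ℝ) * y ^ (k-1-j))
              * (a ^ j * Real.exp (-(lam * a))) := by
    refine setIntegral_congr_fun measurableSet_Ioi (fun a ha => ?_)
    have ha : (0:ℝ) < a := ha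
    have heval : eval (y + a) p - eval y p
        = ∑ k ∈ Finset.range (p.natDegree + 1), p.coeff k * ((y + a) ^ k - y ^ k) := by
      rw [Polynomial.eval_eq_sum_range (y + a), Polynomial.eval_eq_sum_range y,
        ← Finset.sum_sub_distrib]
      exact Finset.sum_congr rfl fun k _ => by ring
    rw [heval, Finset.mul_sum]
    refine Finset.sum_congr rfl fun k _ => ?_
    rw [pow_sub_pow_eq ha.ne' k, Finset.mul_sum, Finset.mul_sum]
    refine Finset.sum_congr rfl fun j _ => ?_
    rw [pow_succ]
    field_simp
  rw [step1]
  have hint2 : ∀ k ∈ Finset.range (p.natDegree + 1), ∀ j ∈ Finset.range k,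
      Integrable (fun a : ℝ => (p.coeff k * (k.choose (j+1) : ℝ) * y ^ (k-1-j))
        * (a ^ j * Real.exp (-(lam * a)))) (volume.restrict (Set.Ioi (0:ℝ))) :=
    fun k _ j _ => (integrableOn_pow_exp j hlam).const_mul _
  rw [MeasureTheory.integral_finset_sum _
    (fun k hk => integrable_finset_sum _ (hint2 k hk))]
  refine Finset.sum_congr rfl fun k hk => ?_
  rw [MeasureTheory.integral_finset_sum _ (hint2 k hk), Finset.mul_sum]
  refine Finset.sum_congr rfl fun j _ => ?_
  rw [MeasureTheory.integral_const_mul, integral_pow_exp j hlam]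
  ring


/-- The image of the monomial `X^k` under the generator, as a polynomial. -/
def Lpoly (s lam : ℝ) (k : ℕ) : Polynomial ℝ :=
  Polynomial.C (-(∑ j ∈ Finset.range k, 1 / (2 * s + j))) * Polynomial.X ^ k
    + ∑ j ∈ Finset.range k,
        Polynomial.C ((k.choose (j+1) : ℝ) * (j.factorial : ℝ) / lam ^ (j+1))
          * Polynomial.X ^ (k-1-j)

lemma eval_Lpoly (s lam y : ℝ) (k : ℕ) :
    eval y (Lpoly s lam k)
      = -(∑ j ∈ Finset.range k, 1 / (2 * s + j)) * y ^ k
        + ∑ j ∈ Finset.range k,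
            (k.choose (j+1) : ℝ) * (j.factorial : ℝ) / lam ^ (j+1) * y ^ (k-1-j) := by
  simp [Lpoly, eval_finset_sum]

lemma reservoirGen_poly {s lam y : ℝ} (hs : 0 < s) (hlam : 0 < lam) (hy : 0 < y)
    (p : Polynomial ℝ) :
    reservoirGen s lam (fun z => eval z p) y
      = ∑ k ∈ Finset.range (p.natDegree + 1), p.coeff k * eval y (Lpoly s lam k) := by
  unfold reservoirGen
  rw [down_eval hs hy p, up_eval hlam p, ← Finset.sum_neg_distrib,
    ← Finset.sum_add_distrib]
  refine Finset.sum_congr rfl fun k _ => ?_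
  rw [eval_Lpoly]
  ring

lemma poly_mul_density_integrableOn {s lam : ℝ} (hs : 0 < s) (hlam : 0 < lam)
    (w : Polynomial ℝ) :
    IntegrableOn (fun y => gammaDensity s lam y * eval y w) (Set.Ioi 0) := by
  have : (fun y => gammaDensity s lam y * eval y w)
      = fun y => ∑ r ∈ Finset.range (w.natDegree + 1),
          w.coeff r * (gammaDensity s lam y * y ^ r) := by
    funext y
    rw [Polynomial.eval_eq_sum_range, Finset.mul_sum]
    exact Finset.sum_congr rfl fun r _ => by ring
  rw [this]
  exact integrable_finset_sum _
    (fun r _ => (gammaDensity_mul_pow_integrableOn hs hlam r).const_mul _)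

def mom (s lam : ℝ) (w : Polynomial ℝ) : ℝ :=
  ∫ y in Set.Ioi (0:ℝ), gammaDensity s lam y * eval y w

lemma mom_add {s lam : ℝ} (hs : 0 < s) (hlam : 0 < lam) (w₁ w₂ : Polynomial ℝ) :
    mom s lam (w₁ + w₂) = mom s lam w₁ + mom s lam w₂ := by
  unfold mom
  rw [← MeasureTheory.integral_add (poly_mul_density_integrableOn hs hlam w₁)
    (poly_mul_density_integrableOn hs hlam w₂)]
  refine setIntegral_congr_fun measurableSet_Ioi (fun y _ => ?_)
  rw [Polynomial.eval_add]
  ring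

lemma mom_sum {s lam : ℝ} (hs : 0 < s) (hlam : 0 < lam) {ι : Type*} (t : Finset ι)
    (f : ι → Polynomial ℝ) :
    mom s lam (∑ i ∈ t, f i) = ∑ i ∈ t, mom s lam (f i) := by
  classical
  induction t using Finset.induction_on with
  | empty => simp [mom]
  | insert _ _ hni ih =>
    rw [Finset.sum_insert hni, Finset.sum_insert hni, mom_add hs hlam, ih]

lemma mom_C_mul_X_pow {s lam : ℝ} (hs : 0 < s) (hlam : 0 < lam) (c : ℝ) (r : ℕ) :
    mom s lam (Polynomial.C c * Polynomial.X ^ r) = c * (pp (2 * s) r / lam ^ r) := by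
  unfold mom
  have : ∀ y : ℝ, gammaDensity s lam y * eval y (Polynomial.C c * Polynomial.X ^ r)
      = c * (gammaDensity s lam y * y ^ r) := by
    intro y; simp; ring
  simp only [this]
  rw [MeasureTheory.integral_const_mul, gammaDensity_integral_mul_pow hs hlam r]

lemma mom_Lpoly_mul {s lam : ℝ} (hs : 0 < s) (hlam : 0 < lam) (k l : ℕ) :
    mom s lam (Lpoly s lam k * Polynomial.X ^ l)
      = (Tsum (2 * s) k (k + l) - csum (2 * s) k (k + l)) / lam ^ (k + l) := by
  have expand : Lpoly s lam k * Polynomial.X ^ l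
      = Polynomial.C (-(∑ j ∈ Finset.range k, 1 / (2 * s + j))) * Polynomial.X ^ (k + l)
        + ∑ j ∈ Finset.range k,
            Polynomial.C ((k.choose (j+1) : ℝ) * (j.factorial : ℝ) / lam ^ (j+1))
              * Polynomial.X ^ ((k-1-j) + l) := by
    rw [Lpoly, add_mul, Finset.sum_mul, mul_assoc, ← pow_add]
    congr 1
    exact Finset.sum_congr rfl fun j _ => by rw [mul_assoc, ← pow_add]
  rw [expand, mom_add hs hlam, mom_sum hs hlam, mom_C_mul_X_pow hs hlam]
  have hterm : ∀ j ∈ Finset.range k,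
      mom s lam (Polynomial.C ((k.choose (j+1) : ℝ) * (j.factorial : ℝ) / lam ^ (j+1))
        * Polynomial.X ^ ((k-1-j) + l))
      = (k.choose (j+1) : ℝ) * (j.factorial : ℝ) * pp (2*s) ((k+l) - (j+1)) / lam ^ (k+l) := by
    intro j hj
    have hjk : j + 1 ≤ k := Finset.mem_range.mp hj
    rw [mom_C_mul_X_pow hs hlam]
    have e1 : (k-1-j) + l = (k+l) - (j+1) := by omega
    have e2 : (j+1) + ((k-1-j) + l) = k + l := by omega
    rw [div_mul_div_comm, ← pow_add, e2, e1]
  rw [Finset.sum_congr rfl hterm]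
  unfold Tsum csum
  rw [sub_div, Finset.sum_div, Finset.sum_div, neg_mul, Finset.sum_mul, ← sub_eq_neg_add]
  congr 1
  exact Finset.sum_congr rfl fun j _ => by ring



lemma mom_symm {s lam : ℝ} (hs : 0 < s) (hlam : 0 < lam) (k l : ℕ) :
    mom s lam (Lpoly s lam k * Polynomial.X ^ l)
      = mom s lam (Polynomial.X ^ k * Lpoly s lam l) := by
  conv_rhs => rw [mul_comm]
  rw [mom_Lpoly_mul hs hlam k l, mom_Lpoly_mul hs hlam l k,
    sym_identity (2 * s) (by linarith) k l, Nat.add_comm k l]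

/-- Reversibility of the boundary reservoir generator with respect to the Gamma(2s, lam)
distribution, on polynomial functions. -/
theorem reservoir_reversibility (s lam : ℝ) (hs : 0 < s) (hlam : 0 < lam)
    (p q : Polynomial ℝ) :
    (∫ y in Set.Ioi (0 : ℝ),
        gammaDensity s lam y *
          (reservoirGen s lam (fun z => Polynomial.eval z p) y * Polynomial.eval y q))
    = ∫ y in Set.Ioi (0 : ℝ),
        gammaDensity s lam y *
          (Polynomial.eval y p * reservoirGen s lam (fun z => Polynomial.eval z q) y) := by
  have lhs_eq : (∫ y in Set.Ioi (0 : ℝ),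
        gammaDensity s lam y *
          (reservoirGen s lam (fun z => Polynomial.eval z p) y * Polynomial.eval y q))
      = ∑ k ∈ Finset.range (p.natDegree + 1), ∑ l ∈ Finset.range (q.natDegree + 1),
          (p.coeff k * q.coeff l) * mom s lam (Lpoly s lam k * Polynomial.X ^ l) := by
    have step : (∫ y in Set.Ioi (0 : ℝ),
          gammaDensity s lam y *
            (reservoirGen s lam (fun z => Polynomial.eval z p) y * Polynomial.eval y q))
        = ∫ y in Set.Ioi (0 : ℝ), ∑ k ∈ Finset.range (p.natDegree + 1),
            ∑ l ∈ Finset.range (q.natDegree + 1),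
              (p.coeff k * q.coeff l)
                * (gammaDensity s lam y * eval y (Lpoly s lam k * Polynomial.X ^ l)) := by
      refine setIntegral_congr_fun measurableSet_Ioi (fun y hy => ?_)
      have hy : (0:ℝ) < y := hy
      rw [reservoirGen_poly hs hlam hy p, Polynomial.eval_eq_sum_range (p := q) y,
        Finset.sum_mul_sum, Finset.mul_sum]
      refine Finset.sum_congr rfl fun k _ => ?_
      rw [Finset.mul_sum]
      refine Finset.sum_congr rfl fun l _ => ?_
      rw [Polynomial.eval_mul, Polynomial.eval_pow, Polynomial.eval_X]
      ring
    rw [step, MeasureTheory.integral_finset_sum _ (fun k _ => integrable_finset_sum _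
      (fun l _ => (poly_mul_density_integrableOn hs hlam _).const_mul _))]
    refine Finset.sum_congr rfl fun k _ => ?_
    rw [MeasureTheory.integral_finset_sum _
      (fun l _ => (poly_mul_density_integrableOn hs hlam _).const_mul _)]
    exact Finset.sum_congr rfl fun l _ => MeasureTheory.integral_const_mul _ _
  have rhs_eq : (∫ y in Set.Ioi (0 : ℝ),
        gammaDensity s lam y *
          (Polynomial.eval y p * reservoirGen s lam (fun z => Polynomial.eval z q) y))
      = ∑ k ∈ Finset.range (p.natDegree + 1), ∑ l ∈ Finset.range (q.natDegree + 1),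
          (p.coeff k * q.coeff l) * mom s lam (Polynomial.X ^ k * Lpoly s lam l) := by
    have step : (∫ y in Set.Ioi (0 : ℝ),
          gammaDensity s lam y *
            (Polynomial.eval y p * reservoirGen s lam (fun z => Polynomial.eval z q) y))
        = ∫ y in Set.Ioi (0 : ℝ), ∑ k ∈ Finset.range (p.natDegree + 1),
            ∑ l ∈ Finset.range (q.natDegree + 1),
              (p.coeff k * q.coeff l)
                * (gammaDensity s lam y * eval y (Polynomial.X ^ k * Lpoly s lam l)) := by
      refine setIntegral_congr_fun measurableSet_Ioi (fun y hy => ?_)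
      have hy : (0:ℝ) < y := hy
      rw [reservoirGen_poly hs hlam hy q, Polynomial.eval_eq_sum_range (p := p) y,
        Finset.sum_mul_sum, Finset.mul_sum]
      refine Finset.sum_congr rfl fun k _ => ?_
      rw [Finset.mul_sum]
      refine Finset.sum_congr rfl fun l _ => ?_
      rw [Polynomial.eval_mul, Polynomial.eval_pow, Polynomial.eval_X]
      ring
    rw [step, MeasureTheory.integral_finset_sum _ (fun k _ => integrable_finset_sum _
      (fun l _ => (poly_mul_density_integrableOn hs hlam _).const_mul _))]
    refine Finset.sum_congr rfl fun k _ => ?_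
    rw [MeasureTheory.integral_finset_sum _
      (fun l _ => (poly_mul_density_integrableOn hs hlam _).const_mul _)]
    exact Finset.sum_congr rfl fun l _ => MeasureTheory.integral_const_mul _ _
  rw [lhs_eq, rhs_eq]
  exact Finset.sum_congr rfl fun k _ => Finset.sum_congr rfl fun l _ =>
    congrArg _ (mom_symm hs hlam k l)


end HeatModel
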